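/- Let f : ℝ → ℝ be continuous and 2π-periodic with Fourier coefficients c_k := (1/2π)∫₀^{2π} f(α)e^{-ikα} dα, and suppose that for every λ ∈ ℝ the set {α ∈ [0,2π) : f(α) = λ} has Lebesgue measure zero. Let 𝔠 : ℓ²(ℤ,ℂ) → ℓ²(ℤ,ℂ) be the bounded operator (𝔠u)_m := ∑_{n∈ℤ} c_{m−n} u_n. Then 𝔠 has no eigenvalues: if u ∈ ℓ²(ℤ,ℂ) and 𝔠u = λu for some λ ∈ ℂ, then u = 0. -/

import Mathlib

open scoped Real ComplexConjugate ENNReal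
open MeasureTheory AddCircle

theorem stmt_13
    (f : ℝ → ℝ)
    (hf_cont : Continuous f)
    (hf_per : Function.Periodic f (2 * π))
    (c : ℤ → ℂ)
    (hc : ∀ k : ℤ, c k = (1 / (2 * π)) * ∫ α in (0:ℝ)..(2 * π),
      ((f α : ℂ)) * Complex.exp (-(Complex.I) * (k : ℂ) * (α : ℂ)))
    (hlevel : ∀ lam : ℝ, volume {α ∈ Set.Ico (0:ℝ) (2 * π) | f α = lam} = 0)
    (u : ℤ → ℂ)
    (hu : Summable fun m : ℤ => ‖u m‖ ^ 2)
    (lam : ℂ)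
    (heig : ∀ m : ℤ, (Summable fun n : ℤ => c (m - n) * u n) ∧
      ∑' n : ℤ, c (m - n) * u n = lam * u m) :
    u = 0 := by
  have hπ : (0:ℝ) < 2 * π := by positivity
  haveI : Fact (0 < 2 * π) := ⟨hπ⟩
  set μ := @haarAddCircle (2*π) ⟨hπ⟩ with hμ
  let F : AddCircle (2*π) → ℝ := hf_per.lift
  have hF_cont : Continuous F := hf_cont.quotient_liftOn' _
  have hF_coe : ∀ x : ℝ, F ↑x = f x := fun x => rfl
  have hFc_cont : Continuous fun z => ((F z : ℂ)) := Complex.continuous_ofReal.comp hF_cont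
  -- conj of coefficients
  have interval_conj : ∀ (g : ℝ → ℂ) (a b : ℝ),
      conj (∫ x in a..b, g x) = ∫ x in a..b, conj (g x) := by
    intro g a b
    simp only [intervalIntegral, map_sub, integral_conj]
  have hconj : ∀ k : ℤ, conj (c k) = c (-k) := by
    intro k
    rw [hc k, hc (-k), map_mul, interval_conj]
    congr 1
    · rw [map_div₀, map_one, map_mul, Complex.conj_ofReal, map_ofNat]
    · apply intervalIntegral.integral_congr
      intro x _
      simp only [map_mul, Complex.conj_ofReal, ← Complex.exp_conj]
      congr 1
      simp only [map_mul, map_neg, Complex.conj_I, Complex.conj_ofReal, map_intCast]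
      push_cast
      ring
  -- key coefficient computation
  have key : ∀ (m n : ℤ),
      fourierCoeff (fun z : AddCircle (2*π) => ((F z : ℂ)) * fourier n z) m = c (m - n) := by
    intro m n
    rw [hc (m - n), fourierCoeff_eq_intervalIntegral _ m 0, zero_add]
    have hint : ∀ x : ℝ, (fourier (-m) (x : AddCircle (2*π))) •
        (((F (x : AddCircle (2*π)) : ℂ)) * fourier n (x : AddCircle (2*π)))
        = ((f x : ℂ)) * Complex.exp (-(Complex.I) * ((m - n : ℤ) : ℂ) * (x : ℂ)) := by
      intro x
      rw [smul_eq_mul, hF_coe, fourier_coe_apply, fourier_coe_apply]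
      rw [mul_comm, mul_assoc, ← Complex.exp_add]
      congr 1
      push_cast
      congr 1
      have hπC : (π:ℂ) ≠ 0 := by exact_mod_cast Real.pi_ne_zero
      field_simp
      ring
    rw [intervalIntegral.integral_congr (g := fun x : ℝ =>
      ((f x : ℂ)) * Complex.exp (-(Complex.I) * ((m - n : ℤ) : ℂ) * (x : ℂ)))
      (fun x _ => hint x)]
    rw [Complex.real_smul]
    push_cast
    ring_nf
  -- ae congruence for fourierCoeff
  have coeff_congr : ∀ (g h : AddCircle (2*π) → ℂ) (k : ℤ), g =ᵐ[μ] h →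
      fourierCoeff g k = fourierCoeff h k := by
    intro g h k hgh
    simp only [fourierCoeff]
    apply integral_congr_ae
    filter_upwards [hgh] with z hz
    rw [hz]
  -- the l2 element
  have hmem : Memℓp u 2 := by
    apply memℓp_gen
    have : (2 : ℝ≥0∞).toReal = (2:ℕ) := by norm_num
    rw [this]
    simpa [Real.rpow_natCast] using hu
  set U : Lp ℂ 2 μ := (@fourierBasis (2*π) ⟨hπ⟩).repr.symm ⟨u, hmem⟩ with hUdef
  have hU : ∀ n : ℤ, (@fourierBasis (2*π) ⟨hπ⟩).repr U n = u n := by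
    intro n
    rw [hUdef, LinearIsometryEquiv.apply_symm_apply]
  -- bound for F
  obtain ⟨C, hC⟩ : ∃ C : ℝ, ∀ z, ‖((F z : ℂ))‖ ≤ C := by
    obtain ⟨C, hC⟩ := (isCompact_range (hFc_cont.norm)).bddAbove
    exact ⟨C, fun z => hC (Set.mem_range_self z)⟩
  -- the product function
  set G : AddCircle (2*π) → ℂ := fun z => ((F z : ℂ)) * (U : AddCircle (2*π) → ℂ) z with hGdef
  have hGmem : MemLp G 2 μ := by
    have hmeasG : AEStronglyMeasurable G μ :=
      (hFc_cont.aestronglyMeasurable).mul (Lp.aestronglyMeasurable U)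
    apply MemLp.of_le_mul (Lp.memLp U) hmeasG
    filter_upwards with z
    show ‖((F z : ℂ)) * (U : AddCircle (2*π) → ℂ) z‖ ≤ C * ‖(U : AddCircle (2*π) → ℂ) z‖
    rw [norm_mul]
    exact mul_le_mul_of_nonneg_right (hC z) (norm_nonneg _)
  -- main computation: fourier coefficients of G
  have hGcoeff : ∀ m : ℤ, fourierCoeff G m = lam * u m := by
    intro m
    set Wc : C(AddCircle (2*π), ℂ) := ⟨fun z => fourier m z * ((F z : ℂ)),
      ((fourier m).continuous.mul hFc_cont)⟩ with hWcdef
    set W : Lp ℂ 2 μ := ContinuousMap.toLp (E := ℂ) 2 μ ℂ Wc with hWdef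
    have hWrepr : ∀ n : ℤ, (@fourierBasis (2*π) ⟨hπ⟩).repr W n = c (n - m) := by
      intro n
      rw [fourierBasis_repr]
      rw [coeff_congr _ _ n (ContinuousMap.coeFn_toLp (E := ℂ) (p := 2) μ (𝕜 := ℂ) Wc)]
      rw [← key n m]
      apply coeff_congr
      filter_upwards with z
      simp only [hWcdef, ContinuousMap.coe_mk, mul_comm]
    -- G's coefficient equals inner product ⟪W, U⟫
    have h1 : fourierCoeff G m = @inner ℂ _ _ W U := by
      rw [MeasureTheory.L2.inner_def]
      simp only [fourierCoeff]
      apply integral_congr_ae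
      filter_upwards [ContinuousMap.coeFn_toLp (E := ℂ) (p := 2) μ (𝕜 := ℂ) Wc] with z hz
      rw [RCLike.inner_apply, hz]
      simp only [hWcdef, ContinuousMap.coe_mk, map_mul, Complex.conj_ofReal, ← fourier_neg]
      rw [smul_eq_mul, hGdef]
      ring
    -- Parseval
    have h2 : @inner ℂ _ _ W U = ∑' n : ℤ, c (m - n) * u n := by
      rw [← HilbertBasis.tsum_inner_mul_inner (@fourierBasis (2*π) ⟨hπ⟩) W U]
      congr 1
      funext n
      rw [← HilbertBasis.repr_apply_apply, hU n]
      have : @inner ℂ _ _ W ((@fourierBasis (2*π) ⟨hπ⟩) n) =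
          conj ((@fourierBasis (2*π) ⟨hπ⟩).repr W n) := by
        rw [← inner_conj_symm, HilbertBasis.repr_apply_apply]
      rw [this, hWrepr n, hconj, neg_sub]
    rw [h1, h2, (heig m).2]
  -- conclude V = lam • U
  have hae : G =ᵐ[μ] fun z => lam * (U : AddCircle (2*π) → ℂ) z := by
    have hV : hGmem.toLp G = lam • U := by
      apply (@fourierBasis (2*π) ⟨hπ⟩).repr.injective
      apply lp.ext
      funext n
      rw [LinearIsometryEquiv.map_smul]
      rw [lp.coeFn_smul, Pi.smul_apply, smul_eq_mul]
      have h1 : (@fourierBasis (2*π) ⟨hπ⟩).repr (hGmem.toLp G) n = lam * u n := by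
        rw [fourierBasis_repr, coeff_congr _ _ n (hGmem.coeFn_toLp), hGcoeff n]
      rw [h1, hU n]
    have := hGmem.coeFn_toLp
    rw [hV] at this
    have h2 := Lp.coeFn_smul lam U
    filter_upwards [this.symm, h2] with z h1z h2z
    rw [h1z, h2z, Pi.smul_apply, smul_eq_mul]
  -- the level set is null
  have hnull : μ {z : AddCircle (2*π) | ((F z : ℂ)) = lam} = 0 := by
    set S : Set (AddCircle (2*π)) := {z | ((F z : ℂ)) = lam} with hS
    have hmeasS : MeasurableSet S :=
      (isClosed_singleton.preimage hFc_cont).measurableSet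
    have hpre : MeasurableSet (((↑) : ℝ → AddCircle (2*π)) ⁻¹' S) :=
      (AddCircle.continuous_mk' (2*π)).measurable hmeasS
    have hvol : volume S = 0 := by
      have hmp := (AddCircle.measurePreserving_mk (2*π) 0).measure_preimage
        hmeasS.nullMeasurableSet
      rw [← hmp, zero_add, Measure.restrict_apply hpre]
      apply measure_mono_null
        (t := {α ∈ Set.Ico (0:ℝ) (2*π) | f α = lam.re} ∪ {2*π})
      · rintro x ⟨hx1, hx2⟩
        have hfx : ((f x : ℝ) : ℂ) = lam := hx1
        rcases eq_or_lt_of_le hx2.2 with h | h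
        · right; simp [h]
        · left
          refine ⟨⟨hx2.1.le, h⟩, ?_⟩
          have h2 := congrArg Complex.re hfx
          simpa using h2
      · exact measure_union_null (hlevel lam.re) (measure_singleton _)
    have hveq := volume_eq_smul_haarAddCircle (T := 2*π)
    rw [hveq, Measure.smul_apply, smul_eq_mul] at hvol
    rcases mul_eq_zero.1 hvol with h | h
    · exact absurd h (by simp [ENNReal.ofReal_eq_zero, not_le, hπ, Real.pi_pos])
    · exact h
  -- conclude U = 0 a.e.
  have hU0 : U = 0 := by
    rw [Lp.eq_zero_iff_ae_eq_zero]
    have hcompl : ∀ᵐ z ∂μ, ((F z : ℂ)) ≠ lam := by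
      rw [ae_iff]
      simpa using hnull
    filter_upwards [hae, hcompl] with z h1 h2
    have : (((F z : ℂ)) - lam) * (U : AddCircle (2*π) → ℂ) z = 0 := by
      rw [sub_mul, hGdef] at *
      simp only at h1
      rw [h1]
      ring
    rcases mul_eq_zero.1 this with h | h
    · exact absurd (sub_eq_zero.1 h) h2
    · simpa using h
  funext n
  have := hU n
  rw [hU0] at this
  rw [← this, map_zero]
  simp [lp.coeFn_zero]
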